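/- (Theorem 2, GenRL guarantee, with an explicit valid sample size.) Let T : S → A → S be a shared transition function and R_i : S → A → ℝ, i ∈ I, reward functions forming a family of deterministic MDPs with shared transitions, let D be a probability mass function on I, let H ≥ 1, and let the policy π* : S → A be α-optimal everywhere. Assume 0 ≤ R_i(s,a) and R_i(s,a) + V*_i(h, T(s,a)) ≤ 1 for all i ∈ I, s ∈ S, a ∈ A, h < H. Suppose V̂ : I → ℕ → S → ℝ satisfies V*_i(h,s) ≥ V̂_i(h,s) ≥ V*_i(h,s) − β for all i, s, and h ≤ H. Fix s_0 ∈ S, ε, δ ∈ (0,1), and a positive integer n with n ≥ (2H²/ε²)·log(4·H·|A|/δ). Draw a sample table ω : Fin H × Fin n → I from the product measure in which each entry is independently distributed according to D, and define the GenRL path as a function of ω inductively for h = 0, …, H−1: a_h is an action attaining the maximum over a ∈ A of (1/n)·Σ_{j<n} [R_{ω(h,j)}(s_h, a) + V̂_{ω(h,j)}(H−h−1, T(s_h, a))] (with some fixed tie-breaking rule), and s_{h+1} = T(s_h, a_h). Then with probability at least 1 − δ over ω: E_{i~D}[Σ_{h<H} R_i(s_h, a_h)] ≥ max_{π' : S →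 A} E_{i~D}[V_i(π', H, s_0)] − ε − 3αH − 3βH. -/

import Mathlib

open scoped BigOperators

/-- The `h`-step value of a stationary deterministic policy `π` in the deterministic MDP
with transition function `T` and reward function `R`. -/
noncomputable def detVal {S A : Type*} (T : S → A → S) (R : S → A → ℝ)
    (π : S → A) : ℕ → S → ℝ
  | 0, _ => 0
  | h + 1, s => R s (π s) + detVal T R π h (T s (π s))

/-- The `h`-step optimal value in the deterministic MDP `(T, R)`. -/
noncomputable def detOptVal {S A : Type*} [Fintype A] [Nonempty A]
    (T : S → A → S) (R : S → A → ℝ) : ℕ → S → ℝ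
  | 0, _ => 0
  | h + 1, s => ⨆ a : A, (R s a + detOptVal T R h (T s a))

/-- Expectation of `f : I → ℝ` under the probability mass function `D` on the finite type
`I`: `E_{i~D}[f(i)] = Σ_i D(i)·f(i)`. -/
noncomputable def expectD {I : Type*} [Fintype I] (D : PMF I) (f : I → ℝ) : ℝ :=
  ∑ i : I, (D i).toReal * f i

/-! ### Auxiliary lemmas -/

section Aux

lemma GRLaux_denom_pos {p : ℝ} (hp0 : 0 ≤ p) (hp1 : p ≤ 1) (s : ℝ) :
    0 < 1 - p + p * Real.exp s := by
  rcases eq_or_lt_of_le hp1 with rfl | h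
  · simpa using Real.exp_pos s
  · have : 0 ≤ p * Real.exp s := mul_nonneg hp0 (Real.exp_pos s).le
    linarith

lemma GRLaux_hoeffding_core {p : ℝ} (hp0 : 0 ≤ p) (hp1 : p ≤ 1) (s : ℝ) :
    (1 - p) * Real.exp (-p * s) + p * Real.exp ((1 - p) * s) ≤ Real.exp (s ^ 2 / 8) := by
  set Dd : ℝ → ℝ := fun s => 1 - p + p * Real.exp s with hDd
  have hDpos : ∀ s, 0 < Dd s := fun s => GRLaux_denom_pos hp0 hp1 s
  set g : ℝ → ℝ := fun s => s ^ 2 / 8 + p * s - Real.log (Dd s) with hg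
  set g1 : ℝ → ℝ := fun s => s / 4 + p - p * Real.exp s / Dd s with hg1
  have hDd' : ∀ s, HasDerivAt Dd (p * Real.exp s) s := by
    intro s
    have h1 : HasDerivAt (fun s : ℝ => Real.exp s) (Real.exp s) s := Real.hasDerivAt_exp s
    have h2 := (h1.const_mul p).const_add (1 - p)
    exact h2
  have hgderiv : ∀ s, HasDerivAt g (g1 s) s := by
    intro s
    have hlog : HasDerivAt (fun s => Real.log (Dd s)) (p * Real.exp s / Dd s) s :=
      (hDd' s).log (hDpos s).ne'
    have hsq : HasDerivAt (fun s : ℝ => s ^ 2 / 8 + p * s) (s / 4 + p) s := by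
      have h1 : HasDerivAt (fun s : ℝ => s ^ 2) (2 * s) s := by
        simpa using (hasDerivAt_pow 2 s)
      have := (h1.div_const 8).add ((hasDerivAt_id s).const_mul p)
      refine this.congr_deriv ?_
      ring
    exact hsq.sub hlog
  have hg1deriv : ∀ s, HasDerivAt g1
      (1/4 - (p * Real.exp s * Dd s - p * Real.exp s * (p * Real.exp s)) / (Dd s) ^ 2) s := by
    intro s
    have hnum : HasDerivAt (fun s => p * Real.exp s) (p * Real.exp s) s :=
      (Real.hasDerivAt_exp s).const_mul p
    have hdiv : HasDerivAt (fun s => p * Real.exp s / Dd s)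
        ((p * Real.exp s * Dd s - p * Real.exp s * (p * Real.exp s)) / (Dd s) ^ 2) s :=
      hnum.div (hDd' s) (hDpos s).ne'
    have hlin : HasDerivAt (fun s : ℝ => s / 4 + p) (1/4) s := by
      simpa using ((hasDerivAt_id s).div_const 4).add_const p
    exact hlin.sub hdiv
  have hg1nonneg : ∀ s,
      0 ≤ 1/4 - (p * Real.exp s * Dd s - p * Real.exp s * (p * Real.exp s)) / (Dd s) ^ 2 := by
    intro s
    have hnum : p * Real.exp s * Dd s - p * Real.exp s * (p * Real.exp s)
        = (1 - p) * (p * Real.exp s) := by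
      simp only [hDd]; ring
    rw [hnum, sub_nonneg, div_le_iff₀ (pow_pos (hDpos s) 2)]
    have hDeq : Dd s = (1 - p) + p * Real.exp s := rfl
    nlinarith [sq_nonneg ((1 - p) - p * Real.exp s)]
  have hg1mono : Monotone g1 :=
    monotone_of_deriv_nonneg (fun s => (hg1deriv s).differentiableAt)
      (fun s => by rw [(hg1deriv s).deriv]; exact hg1nonneg s)
  have hDd0 : Dd 0 = 1 := by simp [hDd]
  have hg10 : g1 0 = 0 := by simp [hg1, hDd0]
  have hgdiff : Differentiable ℝ g := fun s => (hgderiv s).differentiableAt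
  have hg0 : g 0 = 0 := by simp [hg, hDd0]
  have hgnonneg : ∀ s, 0 ≤ g s := by
    intro s
    rcases le_total 0 s with hs | hs
    · have hmono : MonotoneOn g (Set.Ici (0:ℝ)) := by
        refine monotoneOn_of_deriv_nonneg (convex_Ici 0) hgdiff.continuous.continuousOn
          hgdiff.differentiableOn (fun x hx => ?_)
        rw [(hgderiv x).deriv]
        have hx0 : (0:ℝ) ≤ x := le_of_lt (by simpa using hx)
        calc (0:ℝ) = g1 0 := hg10.symm
          _ ≤ g1 x := hg1mono hx0
      have := hmono (Set.self_mem_Ici) (by exact hs) hs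
      rwa [hg0] at this
    · have hanti : AntitoneOn g (Set.Iic (0:ℝ)) := by
        refine antitoneOn_of_deriv_nonpos (convex_Iic 0) hgdiff.continuous.continuousOn
          hgdiff.differentiableOn (fun x hx => ?_)
        rw [(hgderiv x).deriv]
        have hx0 : x ≤ (0:ℝ) := le_of_lt (by simpa using hx)
        calc g1 x ≤ g1 0 := hg1mono hx0
          _ = 0 := hg10
      have := hanti (by exact hs) (Set.self_mem_Iic) hs
      rwa [hg0] at this
  have key : Real.log (Dd s) ≤ s ^ 2 / 8 + p * s := by
    have := hgnonneg s
    simp only [hg] at this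
    linarith
  have hDle : Dd s ≤ Real.exp (s ^ 2 / 8 + p * s) := by
    have := Real.exp_le_exp.mpr key
    rwa [Real.exp_log (hDpos s)] at this
  have hLHS : (1 - p) * Real.exp (-p * s) + p * Real.exp ((1 - p) * s)
      = Real.exp (-(p * s)) * Dd s := by
    have h1 : (1 - p) * s = -(p * s) + s := by ring
    rw [h1, Real.exp_add]
    simp only [hDd]
    have : -p * s = -(p * s) := by ring
    rw [this]
    ring
  rw [hLHS]
  calc Real.exp (-(p * s)) * Dd s ≤ Real.exp (-(p * s)) * Real.exp (s ^ 2 / 8 + p * s) := by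
        exact mul_le_mul_of_nonneg_left hDle (Real.exp_pos _).le
    _ = Real.exp (s ^ 2 / 8) := by rw [← Real.exp_add]; ring_nf

lemma GRLaux_mgf_le {I : Type*} [Fintype I] [Nonempty I] (d : I → ℝ) (hd : ∀ i, 0 ≤ d i)
    (hsum : ∑ i, d i = 1) (v : I → ℝ) (m M t : ℝ) (hbd : ∀ i, m ≤ v i ∧ v i ≤ M) :
    ∑ i, d i * Real.exp (t * v i) ≤
      Real.exp (t * (∑ i, d i * v i) + t ^ 2 * (M - m) ^ 2 / 8) := by
  obtain ⟨i0⟩ := (inferInstance : Nonempty I)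
  have hmM : m ≤ M := le_trans (hbd i0).1 (hbd i0).2
  set μ : ℝ := ∑ i, d i * v i with hμ
  have hmμ : m ≤ μ := by
    calc m = ∑ i, d i * m := by rw [← Finset.sum_mul, hsum, one_mul]
      _ ≤ μ := Finset.sum_le_sum fun i _ => mul_le_mul_of_nonneg_left (hbd i).1 (hd i)
  have hμM : μ ≤ M := by
    calc μ ≤ ∑ i, d i * M := Finset.sum_le_sum fun i _ =>
          mul_le_mul_of_nonneg_left (hbd i).2 (hd i)
      _ = M := by rw [← Finset.sum_mul, hsum, one_mul]
  rcases eq_or_lt_of_le hmM with rfl | hlt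
  · -- degenerate: all v i = m
    have hv : ∀ i, v i = m := fun i => le_antisymm (hbd i).2 (hbd i).1
    have hμm : μ = m := le_antisymm hμM hmμ
    have hL : ∑ i, d i * Real.exp (t * v i) = Real.exp (t * m) := by
      simp only [fun i => hv i]
      rw [← Finset.sum_mul, hsum, one_mul]
    rw [hL, hμm]
    apply Real.exp_le_exp.mpr
    nlinarith [sq_nonneg t]
  · set p : ℝ := (μ - m) / (M - m) with hp
    have hMm : (0:ℝ) < M - m := by linarith
    have hp0 : 0 ≤ p := div_nonneg (by linarith) hMm.le
    have hp1 : p ≤ 1 := by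
      rw [hp, div_le_one hMm]; linarith
    have hps : p * (M - m) = μ - m := div_mul_cancel₀ _ hMm.ne'
    -- chord bound pointwise
    have chord : ∀ i, Real.exp (t * v i) ≤
        ((M - v i) / (M - m)) * Real.exp (t * m) + ((v i - m) / (M - m)) * Real.exp (t * M) := by
      intro i
      have ha : 0 ≤ (M - v i) / (M - m) := div_nonneg (by linarith [(hbd i).2]) hMm.le
      have hb : 0 ≤ (v i - m) / (M - m) := div_nonneg (by linarith [(hbd i).1]) hMm.le
      have hab : (M - v i) / (M - m) + (v i - m) / (M - m) = 1 := by
        field_simp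
        ring
      have := convexOn_exp.2 (Set.mem_univ (t * m)) (Set.mem_univ (t * M)) ha hb hab
      simp only [smul_eq_mul] at this
      have harg : (M - v i) / (M - m) * (t * m) + (v i - m) / (M - m) * (t * M) = t * v i := by
        field_simp
        ring
      rwa [harg] at this
    have hA : ∑ x, d x * (M - v x) = M - μ := by
      simp only [mul_sub]
      rw [Finset.sum_sub_distrib, ← Finset.sum_mul, hsum, one_mul, hμ]
    have hB : ∑ x, d x * (v x - m) = μ - m := by
      simp only [mul_sub]
      rw [Finset.sum_sub_distrib, ← Finset.sum_mul, hsum, one_mul, hμ]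
    have hsum2 : ∑ i, d i * Real.exp (t * v i) ≤
        ((M - μ) / (M - m)) * Real.exp (t * m) + ((μ - m) / (M - m)) * Real.exp (t * M) := by
      calc ∑ i, d i * Real.exp (t * v i)
          ≤ ∑ i, d i * (((M - v i) / (M - m)) * Real.exp (t * m)
              + ((v i - m) / (M - m)) * Real.exp (t * M)) :=
            Finset.sum_le_sum fun i _ => mul_le_mul_of_nonneg_left (chord i) (hd i)
        _ = (∑ x, d x * (M - v x)) * (Real.exp (t * m) / (M - m))
              + (∑ x, d x * (v x - m)) * (Real.exp (t * M) / (M - m)) := by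
            rw [Finset.sum_mul, Finset.sum_mul, ← Finset.sum_add_distrib]
            apply Finset.sum_congr rfl
            intro x _
            ring
        _ = ((M - μ) / (M - m)) * Real.exp (t * m) + ((μ - m) / (M - m)) * Real.exp (t * M) := by
            rw [hA, hB]; ring
    set s' : ℝ := t * (M - m) with hs'
    have hq : (M - μ) / (M - m) = 1 - p := by
      rw [hp]; field_simp; ring
    have e2 : ((M - μ) / (M - m)) * Real.exp (t * m) + ((μ - m) / (M - m)) * Real.exp (t * M)
        = Real.exp (t * μ) * ((1 - p) * Real.exp (-p * s') + p * Real.exp ((1 - p) * s')) := by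
      rw [hq]
      have h1 : t * m = t * μ + (-p * s') := by
        have hps2 : p * s' = t * (μ - m) := by
          rw [hs']
          calc p * (t * (M - m)) = t * (p * (M - m)) := by ring
            _ = t * (μ - m) := by rw [hps]
        have := hps2
        nlinarith [hps2]
      have h2 : t * M = t * μ + (1 - p) * s' := by
        have : (1 - p) * (M - m) = M - μ := by
          have := hps; nlinarith [hps]
        have h3 : (1 - p) * s' = t * (M - μ) := by
          rw [hs']
          calc (1 - p) * (t * (M - m)) = t * ((1 - p) * (M - m)) := by ring
            _ = t * (M - μ) := by rw [this]
        linarith [h3]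
      rw [h1, h2, Real.exp_add, Real.exp_add]
      have hpeq : (μ - m) / (M - m) = p := hp.symm
      rw [hpeq]
      ring
    have e3 := GRLaux_hoeffding_core hp0 hp1 s'
    calc ∑ i, d i * Real.exp (t * v i)
        ≤ Real.exp (t * μ) * ((1 - p) * Real.exp (-p * s') + p * Real.exp ((1 - p) * s')) := by
          rw [← e2]; exact hsum2
      _ ≤ Real.exp (t * μ) * Real.exp (s' ^ 2 / 8) :=
          mul_le_mul_of_nonneg_left e3 (Real.exp_pos _).le
      _ = Real.exp (t * μ + t ^ 2 * (M - m) ^ 2 / 8) := by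
          rw [← Real.exp_add, hs']
          ring_nf
      _ = Real.exp (t * (∑ i, d i * v i) + t ^ 2 * (M - m) ^ 2 / 8) := by rw [← hμ]

open Classical in
lemma GRLaux_chernoff {Z I : Type*} [Fintype Z] [Fintype I] [DecidableEq Z]
    (d : I → ℝ) (hd : ∀ i, 0 ≤ d i)
    (v : Z → I → ℝ) (r t : ℝ) (ht : 0 ≤ t) :
    ∑ ω ∈ Finset.univ.filter (fun ω : Z → I => r ≤ ∑ z, v z (ω z)), ∏ z, d (ω z)
      ≤ Real.exp (-(t * r)) * ∏ z, (∑ i, d i * Real.exp (t * v z i)) := by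
  have hw : ∀ ω : Z → I, 0 ≤ ∏ z, d (ω z) := fun ω => Finset.prod_nonneg fun z _ => hd _
  have step1 : ∑ ω ∈ Finset.univ.filter (fun ω : Z → I => r ≤ ∑ z, v z (ω z)), ∏ z, d (ω z)
      ≤ ∑ ω : Z → I, (∏ z, d (ω z)) * Real.exp (t * ((∑ z, v z (ω z)) - r)) := by
    refine le_trans (Finset.sum_le_sum ?_) (Finset.sum_le_sum_of_subset_of_nonneg
      (Finset.filter_subset _ _) (fun ω _ _ => mul_nonneg (hw ω) (Real.exp_pos _).le))
    intro ω hω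
    have hr : r ≤ ∑ z, v z (ω z) := (Finset.mem_filter.mp hω).2
    have : (1:ℝ) ≤ Real.exp (t * ((∑ z, v z (ω z)) - r)) := by
      rw [Real.one_le_exp_iff]
      exact mul_nonneg ht (by linarith)
    nlinarith [hw ω]
  have step2 : ∀ ω : Z → I,
      (∏ z, d (ω z)) * Real.exp (t * ((∑ z, v z (ω z)) - r))
        = Real.exp (-(t * r)) * ∏ z, (d (ω z) * Real.exp (t * v z (ω z))) := by
    intro ω
    rw [Finset.prod_mul_distrib]
    have hexp : Real.exp (t * ∑ z, v z (ω z)) = ∏ z, Real.exp (t * v z (ω z)) := by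
      rw [Finset.mul_sum, Real.exp_sum]
    rw [mul_sub, Real.exp_sub, hexp, Real.exp_neg]
    field_simp
  calc ∑ ω ∈ Finset.univ.filter (fun ω : Z → I => r ≤ ∑ z, v z (ω z)), ∏ z, d (ω z)
      ≤ ∑ ω : Z → I, (∏ z, d (ω z)) * Real.exp (t * ((∑ z, v z (ω z)) - r)) := step1
    _ = Real.exp (-(t * r)) * ∑ ω : Z → I, ∏ z, (d (ω z) * Real.exp (t * v z (ω z))) := by
        rw [Finset.mul_sum]
        exact Finset.sum_congr rfl fun ω _ => step2 ω
    _ = Real.exp (-(t * r)) * ∏ z, (∑ i, d i * Real.exp (t * v z i)) := by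
        rw [Fintype.prod_sum (fun z i => d i * Real.exp (t * v z i))]

open Classical in
lemma GRLaux_hoeffding_tail {Z I : Type*} [Fintype Z] [Fintype I] [Nonempty I] [DecidableEq Z]
    (d : I → ℝ) (hd : ∀ i, 0 ≤ d i) (hsum : ∑ i, d i = 1)
    (v : Z → I → ℝ) (m M : Z → ℝ) (hbd : ∀ z i, m z ≤ v z i ∧ v z i ≤ M z)
    (hmean : ∀ z, ∑ i, d i * v z i = 0)
    (c : ℝ) (hc : 0 < c) (hrange : ∀ z, M z - m z ≤ c)
    (r : ℝ) (hr : 0 < r) :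
    ∑ ω ∈ Finset.univ.filter (fun ω : Z → I => r ≤ ∑ z, v z (ω z)), ∏ z, d (ω z)
      ≤ Real.exp (-(2 * r ^ 2 / ((Fintype.card Z) * c ^ 2))) := by
  rcases isEmpty_or_nonempty Z with hZ | hZ
  · have : ∀ ω : Z → I, ¬ (r ≤ ∑ z, v z (ω z)) := by
      intro ω
      simp [Finset.univ_eq_empty]
      linarith
    rw [Finset.filter_false_of_mem (fun ω _ => this ω)]
    simpa using (Real.exp_pos _).le
  · set N : ℝ := (Fintype.card Z : ℝ) with hN
    have hN0 : 0 < N := by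
      rw [hN]
      exact_mod_cast Fintype.card_pos
    set t : ℝ := 4 * r / (N * c ^ 2) with ht
    have ht0 : 0 < t := by positivity
    have step := GRLaux_chernoff d hd v r t ht0.le
    have hprod : ∏ z, (∑ i, d i * Real.exp (t * v z i)) ≤ Real.exp (N * (t ^ 2 * c ^ 2 / 8)) := by
      have hterm : ∀ z, ∑ i, d i * Real.exp (t * v z i) ≤ Real.exp (t ^ 2 * c ^ 2 / 8) := by
        intro z
        have h1 := GRLaux_mgf_le d hd hsum (v z) (m z) (M z) t (hbd z)
        rw [hmean z] at h1
        refine le_trans h1 (Real.exp_le_exp.mpr ?_)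
        have h2 : (M z - m z) ^ 2 ≤ c ^ 2 := by
          have hmz : m z ≤ M z :=
            le_trans (hbd z Classical.ofNonempty).1 (hbd z Classical.ofNonempty).2
          have : 0 ≤ M z - m z := by linarith
          nlinarith [hrange z]
        nlinarith [sq_nonneg t]
      calc ∏ z, (∑ i, d i * Real.exp (t * v z i))
          ≤ ∏ _z : Z, Real.exp (t ^ 2 * c ^ 2 / 8) := by
            refine Finset.prod_le_prod (fun z _ => ?_) (fun z _ => hterm z)
            exact Finset.sum_nonneg fun i _ => mul_nonneg (hd i) (Real.exp_pos _).le
        _ = Real.exp (N * (t ^ 2 * c ^ 2 / 8)) := by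
            rw [Finset.prod_const, ← Real.exp_nat_mul, hN, Finset.card_univ]
    calc ∑ ω ∈ Finset.univ.filter (fun ω : Z → I => r ≤ ∑ z, v z (ω z)), ∏ z, d (ω z)
        ≤ Real.exp (-(t * r)) * Real.exp (N * (t ^ 2 * c ^ 2 / 8)) := by
          refine le_trans step (mul_le_mul_of_nonneg_left hprod (Real.exp_pos _).le)
      _ = Real.exp (-(t * r) + N * (t ^ 2 * c ^ 2 / 8)) := (Real.exp_add _ _).symm
      _ ≤ Real.exp (-(2 * r ^ 2 / (N * c ^ 2))) := by
          apply Real.exp_le_exp.mpr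
          have hexp : -(t * r) + N * (t ^ 2 * c ^ 2 / 8) = -(2 * r ^ 2 / (N * c ^ 2)) := by
            rw [ht]
            field_simp
            ring
          rw [hexp]

open MeasureTheory in
open Classical in
lemma GRLaux_measure_eq {Z I : Type*} [Fintype Z] [DecidableEq Z] [Fintype I]
    [MeasurableSpace I] [MeasurableSingletonClass I] (D : PMF I) (E : Set (Z → I)) :
    (Measure.pi fun _ : Z => D.toMeasure) E
      = ∑ ω ∈ Finset.univ.filter (· ∈ E), ∏ z, (D (ω z)) := by
  have hsing : ∀ ω : Z → I, MeasurableSet ({ω} : Set (Z → I)) := by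
    intro ω
    rw [← Set.univ_pi_singleton ω]
    exact MeasurableSet.univ_pi fun z => measurableSet_singleton (ω z)
  have hmu_sing : ∀ ω : Z → I, (Measure.pi fun _ : Z => D.toMeasure) {ω} = ∏ z, (D (ω z)) := by
    intro ω
    rw [← Set.univ_pi_singleton ω, Measure.pi_pi]
    exact Finset.prod_congr rfl fun z _ =>
      D.toMeasure_apply_singleton (ω z) (measurableSet_singleton _)
  have hE : E = ⋃ ω ∈ Finset.univ.filter (· ∈ E), ({ω} : Set (Z → I)) := by
    ext ω
    simp
  have hdisj : Set.PairwiseDisjoint (↑(Finset.univ.filter (· ∈ E)))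
      (fun ω : Z → I => ({ω} : Set (Z → I))) := by
    intro ω _ ω' _ hne
    simp [Function.onFun, Set.disjoint_singleton, hne]
  calc (Measure.pi fun _ : Z => D.toMeasure) E
      = (Measure.pi fun _ : Z => D.toMeasure)
          (⋃ ω ∈ Finset.univ.filter (· ∈ E), ({ω} : Set (Z → I))) := by rw [← hE]
    _ = ∑ ω ∈ Finset.univ.filter (· ∈ E), (Measure.pi fun _ : Z => D.toMeasure) {ω} :=
        measure_biUnion_finset hdisj (fun ω _ => hsing ω)
    _ = ∑ ω ∈ Finset.univ.filter (· ∈ E), ∏ z, (D (ω z)) :=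
        Finset.sum_congr rfl fun ω _ => hmu_sing ω

open MeasureTheory in
open Classical in
lemma GRLaux_measure_le_ofReal {Z I : Type*} [Fintype Z] [DecidableEq Z] [Fintype I]
    [MeasurableSpace I] [MeasurableSingletonClass I] (D : PMF I) (P : (Z → I) → Prop)
    (b : ℝ)
    (hb : ∑ ω ∈ Finset.univ.filter P, ∏ z, (D (ω z)).toReal ≤ b) :
    (Measure.pi fun _ : Z => D.toMeasure) {ω | P ω} ≤ ENNReal.ofReal b := by
  rw [GRLaux_measure_eq D {ω | P ω}]
  have hfeq : Finset.univ.filter (· ∈ {ω : Z → I | P ω}) = Finset.univ.filter P := by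
    ext ω
    simp
  rw [hfeq]
  have h1 : ∀ ω : Z → I, ∏ z, (D (ω z)) = ENNReal.ofReal (∏ z, (D (ω z)).toReal) := by
    intro ω
    rw [← ENNReal.toReal_prod, ENNReal.ofReal_toReal]
    exact ENNReal.prod_ne_top fun z _ => D.apply_ne_top (ω z)
  calc ∑ ω ∈ Finset.univ.filter P, ∏ z, (D (ω z))
      = ENNReal.ofReal (∑ ω ∈ Finset.univ.filter P, ∏ z, (D (ω z)).toReal) := by
        rw [ENNReal.ofReal_sum_of_nonneg
          (fun ω _ => Finset.prod_nonneg fun z _ => ENNReal.toReal_nonneg)]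
        exact Finset.sum_congr rfl fun ω _ => h1 ω
    _ ≤ ENNReal.ofReal b := ENNReal.ofReal_le_ofReal hb

open MeasureTheory in
open Classical in
lemma GRLaux_measurableSet {Z I : Type*} [Fintype Z] [DecidableEq Z] [Fintype I]
    [MeasurableSpace I] [MeasurableSingletonClass I] (E : Set (Z → I)) :
    MeasurableSet E := by
  have hsing : ∀ ω : Z → I, MeasurableSet ({ω} : Set (Z → I)) := by
    intro ω
    rw [← Set.univ_pi_singleton ω]
    exact MeasurableSet.univ_pi fun z => measurableSet_singleton (ω z)
  have hE : E = ⋃ ω ∈ E, ({ω} : Set (Z → I)) := by simp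
  rw [hE]
  exact MeasurableSet.biUnion (Set.to_countable E) (fun ω _ => hsing ω)

lemma GRLaux_detVal_le_detOptVal {S A : Type*} [Fintype A] [Nonempty A]
    (T : S → A → S) (R : S → A → ℝ) (π : S → A) :
    ∀ (h : ℕ) (s : S), detVal T R π h s ≤ detOptVal T R h s := by
  intro h
  induction h with
  | zero => intro s; simp [detVal, detOptVal]
  | succ h ih =>
    intro s
    have h1 : detVal T R π (h+1) s = R s (π s) + detVal T R π h (T s (π s)) := rfl
    have h2 : R s (π s) + detVal T R π h (T s (π s))
        ≤ R s (π s) + detOptVal T R h (T s (π s)) := by linarith [ih (T s (π s))]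
    have h3 : R s (π s) + detOptVal T R h (T s (π s)) ≤ detOptVal T R (h+1) s := by
      show _ ≤ ⨆ a : A, (R s a + detOptVal T R h (T s a))
      exact le_ciSup (Set.Finite.bddAbove (Set.finite_range
        (fun a : A => R s a + detOptVal T R h (T s a)))) (π s)
    rw [h1]; linarith

lemma GRLaux_detOptVal_nonneg {S A : Type*} [Fintype A] [Nonempty A]
    (T : S → A → S) (R : S → A → ℝ) (hR : ∀ s a, 0 ≤ R s a) :
    ∀ (h : ℕ) (s : S), 0 ≤ detOptVal T R h s := by
  intro h
  induction h with
  | zero => intro s; simp [detOptVal]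
  | succ h ih =>
    intro s
    obtain ⟨a⟩ := (inferInstance : Nonempty A)
    have h1 : 0 ≤ R s a + detOptVal T R h (T s a) := add_nonneg (hR s a) (ih (T s a))
    have h2 : R s a + detOptVal T R h (T s a) ≤ detOptVal T R (h+1) s := by
      show _ ≤ ⨆ a : A, (R s a + detOptVal T R h (T s a))
      exact le_ciSup (Set.Finite.bddAbove (Set.finite_range
        (fun a : A => R s a + detOptVal T R h (T s a)))) a
    linarith

lemma GRLaux_detOptVal_le_one {S A : Type*} [Fintype A] [Nonempty A]
    (T : S → A → S) (R : S → A → ℝ) (H : ℕ)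
    (hbdd : ∀ s a (h : ℕ), h < H → R s a + detOptVal T R h (T s a) ≤ 1) :
    ∀ (h : ℕ), h ≤ H → ∀ s : S, detOptVal T R h s ≤ 1 := by
  intro h hh s
  cases h with
  | zero => simp [detOptVal]
  | succ h =>
    show (⨆ a : A, (R s a + detOptVal T R h (T s a))) ≤ 1
    exact ciSup_le fun a => hbdd s a h (by omega)

/-- The state sequence determined by an action sequence. -/
def GRLaux_st {S A : Type*} (T : S → A → S) (s0 : S) (H : ℕ) (as : Fin H → A) : ℕ → S
  | 0 => s0
  | h + 1 => if hh : h < H then T (GRLaux_st T s0 H as h) (as ⟨h, hh⟩) else GRLaux_st T s0 H as h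

section ExpectD

variable {I : Type*} [Fintype I] (D : PMF I)

lemma GRLaux_dR_sum : ∑ i, (D i).toReal = 1 := by
  have h1 : ∑ i, D i = 1 := by
    have := D.tsum_coe
    rwa [tsum_fintype] at this
  have h2 : (∑ i, D i).toReal = 1 := by rw [h1]; simp
  rwa [ENNReal.toReal_sum (fun i _ => D.apply_ne_top i)] at h2

lemma GRLaux_expectD_mono {f g : I → ℝ} (h : ∀ i, f i ≤ g i) : expectD D f ≤ expectD D g :=
  Finset.sum_le_sum fun i _ => mul_le_mul_of_nonneg_left (h i) ENNReal.toReal_nonneg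

lemma GRLaux_expectD_sub (f g : I → ℝ) :
    expectD D (fun i => f i - g i) = expectD D f - expectD D g := by
  simp only [expectD, mul_sub, Finset.sum_sub_distrib]

lemma GRLaux_expectD_add (f g : I → ℝ) :
    expectD D (fun i => f i + g i) = expectD D f + expectD D g := by
  simp only [expectD, mul_add, Finset.sum_add_distrib]

lemma GRLaux_expectD_const (c : ℝ) : expectD D (fun _ => c) = c := by
  simp only [expectD, ← Finset.sum_mul, GRLaux_dR_sum D, one_mul]

lemma GRLaux_expectD_le {f : I → ℝ} {c : ℝ} (h : ∀ i, f i ≤ c) : expectD D f ≤ c := by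
  calc expectD D f ≤ expectD D (fun _ => c) := GRLaux_expectD_mono D h
    _ = c := GRLaux_expectD_const D c

lemma GRLaux_expectD_ge {f : I → ℝ} {c : ℝ} (h : ∀ i, c ≤ f i) : c ≤ expectD D f := by
  calc c = expectD D (fun _ => c) := (GRLaux_expectD_const D c).symm
    _ ≤ expectD D f := GRLaux_expectD_mono D h

lemma GRLaux_expectD_sum (n : ℕ) (F : ℕ → I → ℝ) :
    expectD D (fun i => ∑ h ∈ Finset.range n, F h i)
      = ∑ h ∈ Finset.range n, expectD D (F h) := by
  simp only [expectD, Finset.mul_sum]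
  exact Finset.sum_comm

end ExpectD

end Aux

set_option maxHeartbeats 1000000

/-- **Theorem 2 (GenRL guarantee, with an explicit valid sample size).**
`spath ω` and `apath ω` denote the GenRL greedy path computed (with an arbitrary fixed
tie-breaking rule) from the sample table `ω : Fin H × Fin n → I`, where at step `h` the
action maximizes the empirical average over the `n` fresh samples `ω(h, ·)` of
`R_i(s_h, a) + V̂_i(H−h−1, T(s_h, a))`.  With probability at least `1 − δ` over `ω`, the
expected cumulative reward of the path is at least
`max_{π'} E[V_i(π', H, s_0)] − ε − 3αH − 3βH` (the maximum over the finitely many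
deterministic stationary policies is written as a supremum). -/
theorem genRL_guarantee
    {S A I : Type*} [Fintype S] [Nonempty S] [Fintype A] [Nonempty A]
    [Fintype I] [Nonempty I] [MeasurableSpace I] [MeasurableSingletonClass I]
    (T : S → A → S) (R : I → S → A → ℝ)
    (D : PMF I)
    (H : ℕ) (hH : 1 ≤ H)
    (α β : ℝ) (hα : 0 ≤ α) (hβ : 0 ≤ β)
    (πstar : S → A)
    (hopt : ∀ i : I, ∀ s : S, ∀ h : ℕ, h ≤ H →
      detVal T (R i) πstar h s ≥ detOptVal T (R i) h s - α)
    (hRnonneg : ∀ i : I, ∀ s : S, ∀ a : A, 0 ≤ R i s a)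
    (hbdd : ∀ i : I, ∀ s : S, ∀ a : A, ∀ h : ℕ, h < H →
      R i s a + detOptVal T (R i) h (T s a) ≤ 1)
    (Vhat : I → ℕ → S → ℝ)
    (hVhatub : ∀ i : I, ∀ s : S, ∀ h : ℕ, h ≤ H → Vhat i h s ≤ detOptVal T (R i) h s)
    (hVhatlb : ∀ i : I, ∀ s : S, ∀ h : ℕ, h ≤ H →
      detOptVal T (R i) h s - β ≤ Vhat i h s)
    (s0 : S)
    (ε δ : ℝ) (hε : 0 < ε) (hε1 : ε < 1) (hδ : 0 < δ) (hδ1 : δ < 1)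
    (n : ℕ) (hn : 0 < n)
    (hnsize : (2 * (H : ℝ) ^ 2 / ε ^ 2) * Real.log (4 * H * (Fintype.card A) / δ)
      ≤ (n : ℝ))
    -- the GenRL greedy path, as a function of the sample table `ω`
    (spath : (Fin H × Fin n → I) → ℕ → S)
    (apath : (Fin H × Fin n → I) → ℕ → A)
    (hs0 : ∀ ω : Fin H × Fin n → I, spath ω 0 = s0)
    (hstep : ∀ ω : Fin H × Fin n → I, ∀ h : ℕ, ∀ hh : h < H,
      spath ω (h + 1) = T (spath ω h) (apath ω h))
    (hgreedy : ∀ ω : Fin H × Fin n → I, ∀ h : ℕ, ∀ hh : h < H, ∀ a' : A,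
      (1 / (n : ℝ)) * ∑ j : Fin n,
          (R (ω (⟨h, hh⟩, j)) (spath ω h) a' +
            Vhat (ω (⟨h, hh⟩, j)) (H - h - 1) (T (spath ω h) a')) ≤
        (1 / (n : ℝ)) * ∑ j : Fin n,
          (R (ω (⟨h, hh⟩, j)) (spath ω h) (apath ω h) +
            Vhat (ω (⟨h, hh⟩, j)) (H - h - 1) (T (spath ω h) (apath ω h)))) :
    ENNReal.ofReal (1 - δ) ≤
      (MeasureTheory.Measure.pi fun _ : Fin H × Fin n => D.toMeasure)
        {ω : Fin H × Fin n → I |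
          expectD D (fun i => ∑ h ∈ Finset.range H, R i (spath ω h) (apath ω h)) ≥
            (⨆ π' : S → A, expectD D (fun i => detVal T (R i) π' H s0)) -
              ε - 3 * α * H - 3 * β * H} := by
  classical
  set μ := MeasureTheory.Measure.pi fun _ : Fin H × Fin n => D.toMeasure with hμdef
  have hprob : MeasureTheory.IsProbabilityMeasure μ := by
    rw [hμdef]; infer_instance
  have hH0 : (0:ℝ) < H := by exact_mod_cast hH
  have hn0 : (0:ℝ) < n := by exact_mod_cast hn
  have hA0 : (0:ℝ) < (Fintype.card A : ℝ) := by exact_mod_cast Fintype.card_pos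
  have hH1 : (1:ℝ) ≤ (H:ℝ) := by exact_mod_cast hH
  have hA1 : (1:ℝ) ≤ (Fintype.card A : ℝ) := by exact_mod_cast Fintype.card_pos
  set τ : ℝ := ε + 2 * β * H with hτdef
  have hτ0 : 0 < τ := by nlinarith
  set c : ℝ := 2 * (1 + β) with hcdef
  have hc0 : 0 < c := by nlinarith
  set L : ℝ := Real.log (4 * H * (Fintype.card A) / δ) with hLdef
  have hL0 : 0 ≤ L := by
    apply Real.log_nonneg
    rw [le_div_iff₀ hδ]
    nlinarith [hH1, hA1, hδ1]
  -- bounds on the optimal values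
  have hVopt0 : ∀ (i : I) (k : ℕ) (s : S), 0 ≤ detOptVal T (R i) k s :=
    fun i k s => GRLaux_detOptVal_nonneg T (R i) (hRnonneg i) k s
  have hVopt1 : ∀ (i : I) (k : ℕ), k ≤ H → ∀ s : S, detOptVal T (R i) k s ≤ 1 :=
    fun i k hk s =>
      GRLaux_detOptVal_le_one T (R i) H (fun s a h hh => hbdd i s a h hh) k hk s
  -- the one-step value functions
  set fv : ℕ → S → A → I → ℝ :=
    fun h s a i => R i s a + Vhat i (H - h - 1) (T s a) with hfvdef
  have hfv_bd : ∀ (h : ℕ), h < H → ∀ (s : S) (a : A) (i : I),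
      -β ≤ fv h s a i ∧ fv h s a i ≤ 1 := by
    intro h hh s a i
    have hk1 : H - h - 1 ≤ H := by omega
    have hk2 : H - h - 1 < H := by omega
    constructor
    · have h1 := hVhatlb i (T s a) (H - h - 1) hk1
      have h2 := hVopt0 i (H - h - 1) (T s a)
      have h3 := hRnonneg i s a
      simp only [hfvdef]
      linarith
    · have h1 := hVhatub i (T s a) (H - h - 1) hk1
      have h2 := hbdd i s a (H - h - 1) hk2
      simp only [hfvdef]
      linarith
  -- state sequences from action sequences
  set st : (Fin H → A) → ℕ → S := fun as => GRLaux_st T s0 H as with hstdef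
  set uv : (Fin H → A) → Fin H → I → ℝ := fun as h i =>
    fv h.1 (st as h.1) (as h) i - fv h.1 (st as h.1) (πstar (st as h.1)) i with huvdef
  set Eu : (Fin H → A) → Fin H → ℝ := fun as h => expectD D (uv as h) with hEudef
  have huv_bd : ∀ (as : Fin H → A) (h : Fin H) (i : I),
      -(1 + β) ≤ uv as h i ∧ uv as h i ≤ 1 + β := by
    intro as h i
    obtain ⟨l1, u1⟩ := hfv_bd h.1 h.isLt (st as h.1) (as h) i
    obtain ⟨l2, u2⟩ := hfv_bd h.1 h.isLt (st as h.1) (πstar (st as h.1)) i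
    constructor
    · simp only [huvdef]; linarith
    · simp only [huvdef]; linarith
  -- bad events
  set BadE : (Fin H → A) → Set (Fin H × Fin n → I) := fun as =>
    {ω : Fin H × Fin n → I |
      (n : ℝ) * τ ≤ ∑ z : Fin H × Fin n, (uv as z.1 (ω z) - Eu as z.1)} with hBadEdef
  -- the per-event tail bound
  have htail : ∀ as : Fin H → A,
      μ (BadE as) ≤ ENNReal.ofReal ((δ / (4 * H * (Fintype.card A))) ^ H) := by
    intro as
    rw [hμdef]
    simp only [hBadEdef]
    have hmean : ∀ z : Fin H × Fin n,
        ∑ i, (D i).toReal * (uv as z.1 i - Eu as z.1) = 0 := by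
      intro z
      have hE : Eu as z.1 = ∑ i, (D i).toReal * uv as z.1 i := rfl
      simp only [mul_sub, Finset.sum_sub_distrib, ← Finset.sum_mul, GRLaux_dR_sum D, one_mul]
      rw [← hE]
      ring
    have hboundz : ∀ (z : Fin H × Fin n) (i : I),
        (-(1 + β) - Eu as z.1) ≤ uv as z.1 i - Eu as z.1 ∧
          uv as z.1 i - Eu as z.1 ≤ ((1 + β) - Eu as z.1) := by
      intro z i
      obtain ⟨l, u⟩ := huv_bd as z.1 i
      exact ⟨by linarith, by linarith⟩
    have hrange : ∀ z : Fin H × Fin n,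
        ((1 + β) - Eu as z.1) - (-(1 + β) - Eu as z.1) ≤ c := by
      intro z
      simp only [hcdef]
      ring_nf
      linarith
    have hb := GRLaux_hoeffding_tail (Z := Fin H × Fin n) (fun i => (D i).toReal)
      (fun i => ENNReal.toReal_nonneg) (GRLaux_dR_sum D)
      (fun z i => uv as z.1 i - Eu as z.1)
      (fun z => -(1 + β) - Eu as z.1) (fun z => (1 + β) - Eu as z.1)
      hboundz hmean c hc0 hrange ((n : ℝ) * τ) (by positivity)
    refine GRLaux_measure_le_ofReal D
      (fun ω : Fin H × Fin n → I =>
        (n : ℝ) * τ ≤ ∑ z : Fin H × Fin n, (uv as z.1 (ω z) - Eu as z.1))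
      ((δ / (4 * H * (Fintype.card A))) ^ H) (le_trans hb ?_)
    -- the real-number comparison
    have hcard : ((Fintype.card (Fin H × Fin n)) : ℝ) = (H : ℝ) * n := by
      simp
    have h2HL : 2 * (H : ℝ) ^ 2 * L ≤ n * ε ^ 2 := by
      have h0 := hnsize
      rw [div_mul_eq_mul_div, div_le_iff₀ (pow_pos hε 2)] at h0
      linarith
    have hτc : ε ^ 2 * c ^ 2 ≤ 4 * τ ^ 2 := by
      have h1 : ε * c ≤ 2 * τ := by
        simp only [hcdef, hτdef]
        nlinarith
      nlinarith [mul_pos hε hc0, hτ0]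
    have hexpineq : (H : ℝ) * L ≤ 2 * ((n : ℝ) * τ) ^ 2 /
        ((Fintype.card (Fin H × Fin n)) * c ^ 2) := by
      rw [hcard, le_div_iff₀ (by positivity)]
      have i2 : (2 * (H:ℝ)^2 * L) * ((n:ℝ) * c^2) ≤ ((n:ℝ) * ε^2) * ((n:ℝ) * c^2) :=
        mul_le_mul_of_nonneg_right h2HL (by positivity)
      have i5 : (n:ℝ)^2 * (ε^2 * c^2) ≤ (n:ℝ)^2 * (4 * τ^2) :=
        mul_le_mul_of_nonneg_left hτc (by positivity)
      nlinarith [i2, i5]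
    have hED : Real.exp (-((H : ℝ) * L)) = (δ / (4 * H * (Fintype.card A))) ^ H := by
      have h1 : -((H : ℝ) * L) = (H : ℝ) * (-L) := by ring
      rw [h1, Real.exp_nat_mul]
      congr 1
      rw [hLdef, Real.exp_neg, Real.exp_log (by positivity), inv_div]
    calc Real.exp (-(2 * ((n : ℝ) * τ) ^ 2 / ((Fintype.card (Fin H × Fin n)) * c ^ 2)))
        ≤ Real.exp (-((H : ℝ) * L)) := by
          apply Real.exp_le_exp.mpr
          linarith
      _ = (δ / (4 * H * (Fintype.card A))) ^ H := hED
  -- union bound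
  set Bad : Set (Fin H × Fin n → I) := ⋃ as : Fin H → A, BadE as with hBaddef
  have hBadMeas : MeasurableSet Bad := GRLaux_measurableSet Bad
  have hBadBound : μ Bad ≤ ENNReal.ofReal δ := by
    have hcardfun : ((Fintype.card (Fin H → A)) : ℝ) = (Fintype.card A : ℝ) ^ H := by
      simp
    have hreal : ((Fintype.card (Fin H → A)) : ℝ) * (δ / (4 * H * (Fintype.card A))) ^ H
        ≤ δ := by
      rw [hcardfun, ← mul_pow]
      have h1 : (Fintype.card A : ℝ) * (δ / (4 * H * (Fintype.card A))) = δ / (4 * H) := by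
        field_simp
      rw [h1]
      have h2 : δ / (4 * H) ≤ 1 := by
        rw [div_le_one (by positivity)]
        nlinarith [hH1, hδ1]
      have h3 : (δ / (4 * (H:ℝ))) ^ H ≤ δ / (4 * H) :=
        pow_le_of_le_one (by positivity) h2 (by omega)
      have h4 : δ / (4 * (H:ℝ)) ≤ δ := by
        rw [div_le_iff₀ (by positivity)]
        nlinarith [hH1, hδ]
      linarith
    calc μ Bad ≤ ∑ as : Fin H → A, μ (BadE as) := by
          rw [hBaddef]
          exact MeasureTheory.measure_iUnion_fintype_le μ BadE
      _ ≤ ∑ _as : Fin H → A, ENNReal.ofReal ((δ / (4 * H * (Fintype.card A))) ^ H) :=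
          Finset.sum_le_sum fun as _ => htail as
      _ = (Fintype.card (Fin H → A) : ENNReal) *
            ENNReal.ofReal ((δ / (4 * H * (Fintype.card A))) ^ H) := by
          rw [Finset.sum_const, Finset.card_univ, nsmul_eq_mul]
      _ = ENNReal.ofReal (((Fintype.card (Fin H → A)) : ℝ) *
            (δ / (4 * H * (Fintype.card A))) ^ H) := by
          rw [ENNReal.ofReal_mul (by positivity), ENNReal.ofReal_natCast]
      _ ≤ ENNReal.ofReal δ := ENNReal.ofReal_le_ofReal hreal
  -- the good event implies the value guarantee
  have hGood : Badᶜ ⊆ {ω : Fin H × Fin n → I |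
      expectD D (fun i => ∑ h ∈ Finset.range H, R i (spath ω h) (apath ω h)) ≥
        (⨆ π' : S → A, expectD D (fun i => detVal T (R i) π' H s0)) -
          ε - 3 * α * H - 3 * β * H} := by
    intro ω hω
    simp only [hBaddef, Set.mem_compl_iff, Set.mem_iUnion, not_exists] at hω
    set as : Fin H → A := fun h => apath ω h.1 with hasdef
    have hnb : ω ∉ BadE as := hω as
    -- states agree
    have hsteq : ∀ h : ℕ, h ≤ H → st as h = spath ω h := by
      intro h
      induction h with
      | zero => intro _; rw [hs0 ω]; rfl
      | succ h ih =>
        intro hh1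
        have hhH : h < H := by omega
        have e1 : st as (h + 1) = T (st as h) (as ⟨h, hhH⟩) := by
          simp only [hstdef, GRLaux_st, dif_pos hhH]
        rw [e1, ih (by omega), hstep ω h hhH]
    -- greedy inequality: empirical value of chosen action beats πstar's
    have hgr : ∀ h : Fin H, 0 ≤ ∑ j : Fin n, uv as h (ω (h, j)) := by
      intro h
      have hg := hgreedy ω h.1 h.isLt (πstar (spath ω h.1))
      have hsp : st as h.1 = spath ω h.1 := hsteq h.1 h.isLt.le
      have hXY : ∑ j : Fin n, fv h.1 (spath ω h.1) (πstar (spath ω h.1)) (ω (h, j))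
          ≤ ∑ j : Fin n, fv h.1 (spath ω h.1) (as h) (ω (h, j)) := by
        have hfaceq1 : ∑ j : Fin n, fv h.1 (spath ω h.1) (πstar (spath ω h.1)) (ω (h, j))
            = ∑ j : Fin n,
              (R (ω (⟨h.1, h.isLt⟩, j)) (spath ω h.1) (πstar (spath ω h.1)) +
                Vhat (ω (⟨h.1, h.isLt⟩, j)) (H - h.1 - 1)
                  (T (spath ω h.1) (πstar (spath ω h.1)))) := by
          apply Finset.sum_congr rfl
          intro j _
          simp only [hfvdef]
        have hfaceq2 : ∑ j : Fin n, fv h.1 (spath ω h.1) (as h) (ω (h, j))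
            = ∑ j : Fin n,
              (R (ω (⟨h.1, h.isLt⟩, j)) (spath ω h.1) (apath ω h.1) +
                Vhat (ω (⟨h.1, h.isLt⟩, j)) (H - h.1 - 1)
                  (T (spath ω h.1) (apath ω h.1))) := by
          apply Finset.sum_congr rfl
          intro j _
          simp only [hfvdef, hasdef]
        rw [hfaceq1, hfaceq2]
        have hpos : (0:ℝ) < 1 / n := by positivity
        exact (mul_le_mul_iff_right₀ hpos).mp hg
      have : ∑ j : Fin n, uv as h (ω (h, j))
          = (∑ j : Fin n, fv h.1 (spath ω h.1) (as h) (ω (h, j)))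
            - ∑ j : Fin n, fv h.1 (spath ω h.1) (πstar (spath ω h.1)) (ω (h, j)) := by
        simp only [huvdef, hsp, Finset.sum_sub_distrib]
      rw [this]
      linarith
    -- not bad ⇒ the expected regret sum is small
    have hEusum : -τ < ∑ h : Fin H, Eu as h := by
      have hlt : ∑ z : Fin H × Fin n, (uv as z.1 (ω z) - Eu as z.1) < (n : ℝ) * τ := by
        by_contra hcon
        exact hnb (by simpa [hBadEdef] using not_lt.mp hcon)
      have e1 : ∑ z : Fin H × Fin n, (uv as z.1 (ω z) - Eu as z.1)
          = (∑ h : Fin H, ∑ j : Fin n, uv as h (ω (h, j)))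
            - (n : ℝ) * ∑ h : Fin H, Eu as h := by
        rw [Fintype.sum_prod_type]
        rw [Finset.mul_sum, ← Finset.sum_sub_distrib]
        apply Finset.sum_congr rfl
        intro h _
        rw [Finset.sum_sub_distrib]
        congr 1
        have heach : ∀ x : Fin n, Eu as (h, x).1 = Eu as h := fun x => rfl
        simp only [heach]
        rw [Finset.sum_const, Finset.card_univ, Fintype.card_fin, nsmul_eq_mul]
      have hpos : 0 ≤ ∑ h : Fin H, ∑ j : Fin n, uv as h (ω (h, j)) :=
        Finset.sum_nonneg fun h _ => hgr h
      have h2 : -((n:ℝ) * τ) < (n : ℝ) * ∑ h : Fin H, Eu as h := by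
        rw [e1] at hlt
        linarith
      nlinarith [h2]
    -- the per-step key inequality
    set W : ℕ → ℝ :=
      fun h => expectD D (fun i => detOptVal T (R i) (H - h) (spath ω h)) with hWdef
    have hkey : ∀ h : Fin H,
        Eu as h + W h.1 - W (h.1 + 1) - α - β
          ≤ expectD D (fun i => R i (spath ω h.1) (apath ω h.1)) := by
      intro h
      have hh := h.isLt
      have hsp : st as h.1 = spath ω h.1 := hsteq h.1 hh.le
      have hk1 : H - h.1 - 1 ≤ H := by omega
      have hsub : H - h.1 - 1 = H - (h.1 + 1) := by omega
      have hsucc : H - h.1 = (H - h.1 - 1) + 1 := by omega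
      have hA1 : expectD D (fv h.1 (spath ω h.1) (apath ω h.1))
          ≤ expectD D (fun i => R i (spath ω h.1) (apath ω h.1)) + W (h.1 + 1) := by
        have hpt : ∀ i, fv h.1 (spath ω h.1) (apath ω h.1) i
            ≤ R i (spath ω h.1) (apath ω h.1)
              + detOptVal T (R i) (H - (h.1 + 1)) (spath ω (h.1 + 1)) := by
          intro i
          have h1 := hVhatub i (T (spath ω h.1) (apath ω h.1)) (H - h.1 - 1) hk1
          rw [hstep ω h.1 hh, ← hsub]
          simp only [hfvdef]
          linarith
        calc expectD D (fv h.1 (spath ω h.1) (apath ω h.1))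
            ≤ expectD D (fun i => R i (spath ω h.1) (apath ω h.1)
                + detOptVal T (R i) (H - (h.1 + 1)) (spath ω (h.1 + 1))) :=
              GRLaux_expectD_mono D hpt
          _ = expectD D (fun i => R i (spath ω h.1) (apath ω h.1)) + W (h.1 + 1) := by
              rw [GRLaux_expectD_add]
      have hA2 : W h.1 - α - β
          ≤ expectD D (fv h.1 (spath ω h.1) (πstar (spath ω h.1))) := by
        have hpt : ∀ i, detOptVal T (R i) (H - h.1) (spath ω h.1) - (α + β)
            ≤ fv h.1 (spath ω h.1) (πstar (spath ω h.1)) i := by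
          intro i
          have h1 := hVhatlb i (T (spath ω h.1) (πstar (spath ω h.1))) (H - h.1 - 1) hk1
          have h2 : detVal T (R i) πstar (H - h.1) (spath ω h.1)
              = R i (spath ω h.1) (πstar (spath ω h.1))
                + detVal T (R i) πstar (H - h.1 - 1)
                    (T (spath ω h.1) (πstar (spath ω h.1))) := by
            rw [hsucc]
            rfl
          have h3 := GRLaux_detVal_le_detOptVal T (R i) πstar (H - h.1 - 1)
            (T (spath ω h.1) (πstar (spath ω h.1)))
          have h4 := hopt i (spath ω h.1) (H - h.1) (by omega)
          simp only [hfvdef]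
          linarith
        have heq : expectD D (fun i => detOptVal T (R i) (H - h.1) (spath ω h.1) - (α + β))
            = W h.1 - (α + β) := by
          rw [GRLaux_expectD_sub D _ (fun _ => α + β), GRLaux_expectD_const]
        calc W h.1 - α - β
            = expectD D (fun i => detOptVal T (R i) (H - h.1) (spath ω h.1) - (α + β)) := by
              rw [heq]; ring
          _ ≤ expectD D (fv h.1 (spath ω h.1) (πstar (spath ω h.1))) :=
              GRLaux_expectD_mono D hpt
      have hEu : Eu as h = expectD D (fv h.1 (spath ω h.1) (apath ω h.1))
          - expectD D (fv h.1 (spath ω h.1) (πstar (spath ω h.1))) := by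
        have : Eu as h = expectD D (fun i =>
            fv h.1 (spath ω h.1) (as h) i - fv h.1 (spath ω h.1) (πstar (spath ω h.1)) i) := by
          simp only [hEudef, huvdef, hsp]
        rw [this, GRLaux_expectD_sub]
      linarith
    -- assemble
    have hexp : expectD D (fun i => ∑ h ∈ Finset.range H, R i (spath ω h) (apath ω h))
        = ∑ h ∈ Finset.range H, expectD D (fun i => R i (spath ω h) (apath ω h)) :=
      GRLaux_expectD_sum D H _
    have hW0 : W 0 = expectD D (fun i => detOptVal T (R i) H s0) := by
      simp only [hWdef, Nat.sub_zero, hs0 ω]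
    have hWH : W H = 0 := by
      simp only [hWdef, Nat.sub_self]
      have : ∀ i : I, detOptVal T (R i) 0 (spath ω H) = 0 := fun i => rfl
      simp only [this]
      simp [expectD]
    have hsup : (⨆ π' : S → A, expectD D (fun i => detVal T (R i) π' H s0)) ≤ W 0 := by
      rw [hW0]
      exact ciSup_le fun π' =>
        GRLaux_expectD_mono D (fun i => GRLaux_detVal_le_detOptVal T (R i) π' H s0)
    have hmain : (∑ h : Fin H, Eu as h) + (W 0 - W H) - (α + β) * H
        ≤ ∑ h ∈ Finset.range H, expectD D (fun i => R i (spath ω h) (apath ω h)) := by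
      have h1 : ∑ h ∈ Finset.range H, expectD D (fun i => R i (spath ω h) (apath ω h))
          = ∑ h : Fin H, expectD D (fun i => R i (spath ω h.1) (apath ω h.1)) :=
        (Fin.sum_univ_eq_sum_range (fun k => expectD D (fun i => R i (spath ω k) (apath ω k))) H).symm
      rw [h1]
      have h2 : ∑ h : Fin H, (Eu as h + (W h.1 - W (h.1 + 1)) - (α + β))
          ≤ ∑ h : Fin H, expectD D (fun i => R i (spath ω h.1) (apath ω h.1)) :=
        Finset.sum_le_sum fun h _ => by linarith [hkey h]
      have h3 : ∑ h : Fin H, (Eu as h + (W h.1 - W (h.1 + 1)) - (α + β))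
          = (∑ h : Fin H, Eu as h) + (∑ h : Fin H, (W h.1 - W (h.1 + 1))) - (α + β) * H := by
        rw [Finset.sum_sub_distrib, Finset.sum_add_distrib, Finset.sum_const,
          Finset.card_univ, Fintype.card_fin, nsmul_eq_mul]
        ring
      have h4 : ∑ h : Fin H, (W h.1 - W (h.1 + 1)) = W 0 - W H := by
        rw [Fin.sum_univ_eq_sum_range (fun k => W k - W (k + 1)) H]
        exact Finset.sum_range_sub' W H
      rw [h3, h4] at h2
      exact h2
    -- finish the pointwise bound
    show expectD D (fun i => ∑ h ∈ Finset.range H, R i (spath ω h) (apath ω h)) ≥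
        (⨆ π' : S → A, expectD D (fun i => detVal T (R i) π' H s0)) -
          ε - 3 * α * H - 3 * β * H
    rw [hexp]
    have hαH : 0 ≤ α * H := by positivity
    have hβH : 0 ≤ β * H := by positivity
    simp only [hτdef] at hEusum
    nlinarith [hmain, hEusum, hsup, hWH, hαH, hβH]
  -- conclude
  have hfinal : ENNReal.ofReal (1 - δ) ≤ μ Badᶜ := by
    have h1 : ENNReal.ofReal (1 - δ) = 1 - ENNReal.ofReal δ := by
      rw [ENNReal.ofReal_sub 1 hδ.le]
      simp
    rw [h1, MeasureTheory.prob_compl_eq_one_sub hBadMeas]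
    exact tsub_le_tsub_left hBadBound 1
  exact le_trans hfinal (MeasureTheory.measure_mono hGood)
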